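/- For α ∈ (1/2, 1) and κ > 0, the equation φ(y) = 2α·y·(1 - Φ(y)) has a solution y* in (0, ȳ] where ȳ = (2α - 1)^{-1/2}; moreover the function y ↦ φ(y) - 2αy(1-Φ(y)) is positive at y = 0 and nonpositive at y = ȳ. -/

import Mathlib

noncomputable def phi (x : ℝ) : ℝ := (Real.sqrt (2 * Real.pi))⁻¹ * Real.exp (-x ^ 2 / 2)

noncomputable def Phi (x : ℝ) : ℝ := ∫ t in Set.Iic x, phi t

open Real MeasureTheory Filter Set Topology

lemma phi_eq : phi = fun x => (Real.sqrt (2 * Real.pi))⁻¹ * Real.exp (-(1/2 : ℝ) * x ^ 2) := by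
  funext x; unfold phi; congr 1; ring_nf

lemma phi_pos (x : ℝ) : 0 < phi x := by
  unfold phi
  exact mul_pos (inv_pos.mpr (Real.sqrt_pos.mpr (by positivity))) (Real.exp_pos _)

lemma continuous_phi : Continuous phi := by
  unfold phi; fun_prop

lemma integrable_phi : Integrable phi := by
  rw [phi_eq]
  exact (integrable_exp_neg_mul_sq (by norm_num : (0:ℝ) < 1/2)).const_mul _

lemma integral_phi : ∫ x, phi x = 1 := by
  rw [phi_eq]
  rw [MeasureTheory.integral_const_mul, integral_gaussian,
    show Real.pi / (1/2) = 2 * Real.pi by ring]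
  exact inv_mul_cancel₀ (ne_of_gt (Real.sqrt_pos.mpr (by positivity)))

lemma phi_hasDerivAt (x : ℝ) : HasDerivAt phi (-(x * phi x)) x := by
  have h1 : HasDerivAt (fun x : ℝ => -x ^ 2 / 2) (-x) x := by
    have := ((hasDerivAt_pow 2 x).neg).div_const 2
    refine this.congr_deriv ?_
    push_cast
    ring
  have h2 := (h1.exp).const_mul (Real.sqrt (2 * Real.pi))⁻¹
  have : HasDerivAt phi ((Real.sqrt (2 * Real.pi))⁻¹ * (Real.exp (-x ^ 2 / 2) * -x)) x := h2
  convert this using 1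
  unfold phi; ring

lemma Phi_hasDerivAt (x : ℝ) : HasDerivAt Phi (phi x) x := by
  have key : ∀ y : ℝ, Phi y = Phi 0 + ∫ t in (0:ℝ)..y, phi t := by
    intro y
    have := intervalIntegral.integral_Iic_sub_Iic (f := phi) (μ := volume)
      integrable_phi.integrableOn integrable_phi.integrableOn (a := 0) (b := y)
    unfold Phi
    linarith [this]
  have h : HasDerivAt (fun y => Phi 0 + ∫ t in (0:ℝ)..y, phi t) (phi x) x := by
    refine HasDerivAt.const_add _ ?_
    exact intervalIntegral.integral_hasDerivAt_right
      (continuous_phi.intervalIntegrable _ _)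
      (continuous_phi.stronglyMeasurableAtFilter _ _)
      continuous_phi.continuousAt
  exact h.congr_of_eventuallyEq (Eventually.of_forall key)

lemma continuous_Phi : Continuous Phi := by
  have : Differentiable ℝ Phi := fun x => (Phi_hasDerivAt x).differentiableAt
  exact this.continuous

lemma one_sub_Phi (y : ℝ) : 1 - Phi y = ∫ t in Set.Ioi y, phi t := by
  have := intervalIntegral.integral_Iic_add_Ioi (b := y) (μ := volume)
    integrable_phi.integrableOn integrable_phi.integrableOn
  rw [integral_phi] at this
  unfold Phi
  linarith

lemma phi_tendsto_zero : Tendsto phi atTop (𝓝 0) := by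
  have h2 : Tendsto (fun x : ℝ => x ^ 2) atTop atTop := tendsto_pow_atTop (by norm_num)
  have h3 : Tendsto (fun x : ℝ => -x ^ 2 / 2) atTop atBot :=
    (tendsto_neg_atBot_iff.mpr h2).atBot_div_const (by norm_num)
  have h4 := (Real.tendsto_exp_atBot.comp h3).const_mul (Real.sqrt (2 * Real.pi))⁻¹
  unfold phi; simpa only [Function.comp_def, mul_zero] using h4

lemma integral_mul_phi (y : ℝ) : ∫ t in Set.Ioi y, t * phi t = phi y := by
  have hderiv : ∀ x ∈ Set.Ioi y, HasDerivAt (fun t => -phi t) (x * phi x) x := by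
    intro x _
    exact (phi_hasDerivAt x).neg.congr_deriv (neg_neg _)
  have hint : IntegrableOn (fun t => t * phi t) (Set.Ioi y) := by
    have : Integrable (fun t : ℝ => (Real.sqrt (2 * Real.pi))⁻¹ * (t * Real.exp (-(1/2:ℝ) * t ^ 2))) :=
      (integrable_mul_exp_neg_mul_sq (by norm_num : (0:ℝ) < 1/2)).const_mul _
    refine (this.congr ?_).integrableOn
    filter_upwards with t
    rw [phi_eq]; ring
  have htend : Tendsto (fun t => -phi t) atTop (𝓝 0) := by
    simpa using phi_tendsto_zero.neg
  have := MeasureTheory.integral_Ioi_of_hasDerivAt_of_tendsto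
    (continuous_phi.neg.continuousWithinAt) hderiv hint htend
  rw [this]; simp

lemma one_sub_Phi_nonneg (y : ℝ) : 0 ≤ 1 - Phi y := by
  rw [one_sub_Phi]
  exact setIntegral_nonneg measurableSet_Ioi fun t _ => (phi_pos t).le

lemma mills_upper {y : ℝ} (hy : 0 < y) : 1 - Phi y ≤ phi y / y := by
  rw [one_sub_Phi]
  have h1 : ∫ t in Set.Ioi y, phi t ≤ ∫ t in Set.Ioi y, (1/y) * (t * phi t) := by
    refine setIntegral_mono_on integrable_phi.integrableOn ?_ measurableSet_Ioi ?_
    · have : Integrable (fun t : ℝ => (Real.sqrt (2 * Real.pi))⁻¹ * (t * Real.exp (-(1/2:ℝ) * t ^ 2))) :=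
        (integrable_mul_exp_neg_mul_sq (by norm_num : (0:ℝ) < 1/2)).const_mul _
      refine ((this.congr ?_).integrableOn).const_mul _
      filter_upwards with t
      rw [phi_eq]; ring
    · intro t ht
      have hty : y < t := ht
      have h1y : 1 ≤ t / y := (one_le_div hy).mpr hty.le
      have : phi t * 1 ≤ phi t * (t / y) :=
        mul_le_mul_of_nonneg_left h1y (phi_pos t).le
      calc phi t = phi t * 1 := by ring
        _ ≤ phi t * (t / y) := this
        _ = 1/y * (t * phi t) := by field_simp
  rw [MeasureTheory.integral_const_mul, integral_mul_phi] at h1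
  calc ∫ t in Set.Ioi y, phi t ≤ 1/y * phi y := h1
    _ = phi y / y := by ring

lemma tendsto_one_sub_Phi : Tendsto (fun y => 1 - Phi y) atTop (𝓝 0) := by
  refine tendsto_of_tendsto_of_tendsto_of_le_of_le' tendsto_const_nhds phi_tendsto_zero ?_ ?_
  · exact Eventually.of_forall fun y => one_sub_Phi_nonneg y
  · filter_upwards [eventually_ge_atTop (1:ℝ)] with y hy
    have hy0 : (0:ℝ) < y := lt_of_lt_of_le one_pos hy
    calc 1 - Phi y ≤ phi y / y := mills_upper hy0
      _ ≤ phi y / 1 := by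
          apply div_le_div_of_nonneg_left (phi_pos y).le one_pos hy
      _ = phi y := by ring

lemma g_hasDerivAt (y : ℝ) :
    HasDerivAt (fun y => (1 - Phi y) - y * phi y / (1 + y ^ 2))
      (-(2 * phi y / (1 + y ^ 2) ^ 2)) y := by
  have h1y2 : (0:ℝ) < 1 + y ^ 2 := by positivity
  have hu : HasDerivAt (fun y : ℝ => y * phi y) (1 * phi y + y * -(y * phi y)) y :=
    (hasDerivAt_id y).mul (phi_hasDerivAt y)
  have hv : HasDerivAt (fun y : ℝ => 1 + y ^ 2) (2 * y) y := by
    simpa using (hasDerivAt_pow 2 y).const_add 1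
  have hq := hu.div hv h1y2.ne'
  have hp : HasDerivAt (fun y => 1 - Phi y) (-phi y) y := by
    simpa using (Phi_hasDerivAt y).const_sub 1
  have := hp.sub hq
  refine this.congr_deriv ?_
  field_simp
  ring

lemma g_nonneg (y : ℝ) : 0 ≤ (1 - Phi y) - y * phi y / (1 + y ^ 2) := by
  have hanti : Antitone (fun y => (1 - Phi y) - y * phi y / (1 + y ^ 2)) := by
    refine antitone_of_hasDerivAt_nonpos (f' := fun y => -(2 * phi y / (1 + y ^ 2) ^ 2))
      (fun x => g_hasDerivAt x) fun x => ?_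
    simp only [Pi.zero_apply]
    have : 0 < 2 * phi x / (1 + x ^ 2) ^ 2 := by
      have := phi_pos x; positivity
    linarith
  have htend : Tendsto (fun y => (1 - Phi y) - y * phi y / (1 + y ^ 2)) atTop (𝓝 0) := by
    have h2 : Tendsto (fun y : ℝ => y * phi y / (1 + y ^ 2)) atTop (𝓝 0) := by
      refine tendsto_of_tendsto_of_tendsto_of_le_of_le' tendsto_const_nhds phi_tendsto_zero ?_ ?_
      · filter_upwards [eventually_ge_atTop (0:ℝ)] with y hy
        have := phi_pos y; positivity
      · filter_upwards [eventually_ge_atTop (0:ℝ)] with y hy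
        have h1y2 : (0:ℝ) < 1 + y ^ 2 := by positivity
        rw [div_le_iff₀ h1y2]
        nlinarith [phi_pos y, sq_nonneg (y - 1)]
    simpa using tendsto_one_sub_Phi.sub h2
  exact le_of_tendsto htend (eventually_atTop.2 ⟨y, fun x hx => hanti hx⟩)

lemma mills_lower (y : ℝ) : y * phi y / (1 + y ^ 2) ≤ 1 - Phi y := by
  linarith [g_nonneg y]

/-- For `α ∈ (1/2, 1)`, the equation `φ(y) = 2α y (1 - Φ(y))` has a solution
`y* ∈ (0, ȳ]` with `ȳ = (2α - 1)^{-1/2}`; moreover `y ↦ φ(y) - 2α y (1 - Φ(y))`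
is positive at `0` and nonpositive at `ȳ`. -/
theorem optimality_equation_solution (α κ : ℝ) (hα : α ∈ Set.Ioo (1/2 : ℝ) 1)
    (hκ : 0 < κ) :
    (∃ y ∈ Set.Ioc (0 : ℝ) (1 / Real.sqrt (2 * α - 1)),
        phi y = 2 * α * y * (1 - Phi y)) ∧
      0 < phi 0 - 2 * α * 0 * (1 - Phi 0) ∧
      phi (1 / Real.sqrt (2 * α - 1))
          - 2 * α * (1 / Real.sqrt (2 * α - 1))
            * (1 - Phi (1 / Real.sqrt (2 * α - 1))) ≤ 0 := by
  obtain ⟨hα1, hα2⟩ := hα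
  have h2α : 0 < 2 * α - 1 := by linarith
  set c : ℝ := 1 / Real.sqrt (2 * α - 1) with hc
  have hcpos : 0 < c := by
    rw [hc]
    exact one_div_pos.mpr (Real.sqrt_pos.mpr h2α)
  have hcsq : c ^ 2 = 1 / (2 * α - 1) := by
    rw [hc, div_pow, one_pow, Real.sq_sqrt h2α.le]
  have hf0 : 0 < phi 0 - 2 * α * 0 * (1 - Phi 0) := by
    simpa using phi_pos 0
  have hfc : phi c - 2 * α * c * (1 - Phi c) ≤ 0 := by
    have hm := mills_lower c
    have key : 2 * α * c * (c * phi c / (1 + c ^ 2)) = phi c := by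
      have h : 2 * α * c ^ 2 = 1 + c ^ 2 := by
        rw [hcsq]; field_simp; ring
      have hne : (1 + c ^ 2) ≠ 0 := by positivity
      field_simp
      linear_combination phi c * h
    have h1 : 2 * α * c * (c * phi c / (1 + c ^ 2)) ≤ 2 * α * c * (1 - Phi c) := by
      apply mul_le_mul_of_nonneg_left hm
      positivity
    linarith [key ▸ h1]
  refine ⟨?_, hf0, hfc⟩
  have hcont : ContinuousOn (fun y => phi y - 2 * α * y * (1 - Phi y)) (Set.Icc 0 c) := by
    apply Continuous.continuousOn
    exact continuous_phi.sub ((continuous_const.mul continuous_id).mul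
      (continuous_const.sub continuous_Phi))
  have hivt := intermediate_value_Icc' hcpos.le hcont
  have h0mem : (0:ℝ) ∈ Set.Icc (phi c - 2 * α * c * (1 - Phi c))
      (phi 0 - 2 * α * 0 * (1 - Phi 0)) := ⟨hfc, hf0.le⟩
  obtain ⟨y, hy, hfy⟩ := hivt h0mem
  have hfy' : phi y - 2 * α * y * (1 - Phi y) = 0 := hfy
  refine ⟨y, ⟨?_, hy.2⟩, by linarith⟩
  rcases lt_or_eq_of_le hy.1 with h | h
  · exact h
  · exfalso
    subst h
    linarith
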